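/- For every finite set Γ of subsets of a set A (a finite unary relational language), the set {Pol(Q) : Q ⊆ DD(Γ)} of polymorphism clones determined by sets of relations disjunctively definable from Γ is countable (of cardinality at most ℵ₀). -/

import Mathlib

/-- The `n`-ary cross relation defined by the tuple `γ` of unary relations:
`{(x₁,…,xₙ) : x₁ ∈ γ₁ ∨ … ∨ xₙ ∈ γₙ}`. -/
def Cross {A : Type*} {n : ℕ} (γ : Fin n → Set A) : Set (Fin n → A) :=
  {x | ∃ i, x i ∈ γ i}

/-- A finitary relation on `A`: an arity together with a set of tuples of that arity. -/
abbrev FinRel (A : Type*) := Σ n : ℕ, Set (Fin n → A)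

/-- A `k`-ary operation `f` preserves an `n`-ary relation `ρ` if applying `f`
componentwise to any `k` tuples of `ρ` yields a tuple of `ρ`. -/
def Preserves {A : Type*} {k n : ℕ} (f : (Fin k → A) → A) (ρ : Set (Fin n → A)) : Prop :=
  ∀ r : Fin k → Fin n → A, (∀ j, r j ∈ ρ) → (fun i => f fun j => r j i) ∈ ρ

/-- A finitary operation on `A` of positive arity `k + 1`. -/
abbrev Op (A : Type*) := Σ k : ℕ, (Fin (k + 1) → A) → A

/-- The polymorphism clone of a set of finitary relations: all finitary operations
of positive arity preserving every relation of the set. -/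
def Pol {A : Type*} (Q : Set (FinRel A)) : Set (Op A) :=
  {f | ∀ ρ ∈ Q, Preserves f.2 ρ.2}

/-- Relations disjunctively definable from the unary language `Γ`:
crosses `R(γ₁,…,γₙ)` with `n ≥ 1` and all `γᵢ ∈ Γ`. -/
def DD {A : Type*} (Γ : Set (Set A)) : Set (FinRel A) :=
  {ρ | 1 ≤ ρ.1 ∧ ∃ γ : Fin ρ.1 → Set A, (∀ i, γ i ∈ Γ) ∧ ρ.2 = Cross γ}

namespace CPAux

/-- L1: if `γ' = γ ∘ π` with `π` surjective, then preserving `Cross γ'` implies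
preserving `Cross γ`. -/
lemma preserves_of_comp {A : Type*} {k n n' : ℕ} (f : (Fin k → A) → A) (γ : Fin n → Set A)
    (π : Fin n' → Fin n) (hπ : Function.Surjective π)
    (h : Preserves f (Cross (γ ∘ π))) : Preserves f (Cross γ) := by
  intro r hr
  have hr' : ∀ j, (fun c => r j (π c)) ∈ Cross (γ ∘ π) := by
    intro j
    obtain ⟨i, hi⟩ := hr j
    obtain ⟨c, rfl⟩ := hπ i
    exact ⟨c, hi⟩
  obtain ⟨c, hc⟩ := h (fun j c => r j (π c)) hr'
  exact ⟨π c, hc⟩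

lemma exists_surj {α β : Type*} [Fintype α] [Fintype β]
    (h1 : Fintype.card α ≤ Fintype.card β) (h2 : Nonempty β → Nonempty α) :
    ∃ σ : β → α, Function.Surjective σ := by
  classical
  by_cases hβ : Nonempty β
  · have hα : Nonempty α := h2 hβ
    obtain ⟨ι⟩ : Nonempty (α ↪ β) := Function.Embedding.nonempty_of_card_le h1
    refine ⟨fun y => if h : ∃ x, ι x = y then h.choose else Classical.arbitrary α, ?_⟩
    intro x
    refine ⟨ι x, ?_⟩
    have h : ∃ x', ι x' = ι x := ⟨x, rfl⟩
    simp only [dif_pos h]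
    exact ι.injective h.choose_spec
  · have hβ' : IsEmpty β := not_nonempty_iff.mp hβ
    have hα : IsEmpty α := by
      rw [← Fintype.card_eq_zero_iff] at hβ' ⊢
      omega
    exact ⟨fun y => (hβ'.elim y), fun x => (hα.elim x)⟩

lemma exists_surj_comp {n n' d : ℕ} (g : Fin n → Fin d) (g' : Fin n' → Fin d)
    (hs : ∀ b, (∃ c, g' c = b) → ∃ i, g i = b)
    (hc : ∀ b, Fintype.card {i // g i = b} ≤ Fintype.card {c // g' c = b}) :
    ∃ π : Fin n' → Fin n, Function.Surjective π ∧ g ∘ π = g' := by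
  classical
  have key : ∀ b, ∃ σ : {c // g' c = b} → {i // g i = b}, Function.Surjective σ := by
    intro b
    refine exists_surj (hc b) ?_
    rintro ⟨⟨c, hcb⟩⟩
    obtain ⟨i, hi⟩ := hs b ⟨c, hcb⟩
    exact ⟨⟨i, hi⟩⟩
  choose σ hσ using key
  have keyeq : ∀ (c : Fin n') (b) (h : g' c = b) (x : {i // g i = b}),
      σ b ⟨c, h⟩ = x → (σ (g' c) ⟨c, rfl⟩).1 = x.1 := by
    intro c b h x hx
    subst h
    exact congrArg Subtype.val hx
  refine ⟨fun c => (σ (g' c) ⟨c, rfl⟩).1, ?_, ?_⟩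
  · intro i
    obtain ⟨⟨c, hcb⟩, hci⟩ := hσ (g i) ⟨i, rfl⟩
    exact ⟨c, keyeq c (g i) hcb ⟨i, rfl⟩ hci⟩
  · funext c
    exact (σ (g' c) ⟨c, rfl⟩).2

variable {d : ℕ}

/-- The index type for crosses over a language of size `d`. -/
abbrev Idx (d : ℕ) := Σ n : ℕ, Fin n → Fin d

/-- `x ≼ y` : there is a surjection `π` with `x.2 ∘ π = y.2`. -/
def rel (x y : Idx d) : Prop :=
  ∃ π : Fin y.1 → Fin x.1, Function.Surjective π ∧ x.2 ∘ π = y.2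

noncomputable def cnt (x : Idx d) : Fin d → ℕ := fun b => Fintype.card {i // x.2 i = b}

noncomputable def zer (x : Idx d) : Fin d → ℕ := fun b => if cnt x b = 0 then 1 else 0

lemma rel_of (x y : Idx d) (h1 : cnt x ≤ cnt y) (h2 : zer x ≤ zer y) : rel x y := by
  have hs : ∀ b, (∃ c, y.2 c = b) → ∃ i, x.2 i = b := by
    intro b hb
    have hy : cnt y b ≠ 0 := by
      obtain ⟨c, hcb⟩ := hb
      have hne : Nonempty {c // y.2 c = b} := ⟨⟨c, hcb⟩⟩
      have : 0 < cnt y b := Fintype.card_pos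
      omega
    have hzy : zer y b = 0 := by simp [zer, hy]
    have hx : cnt x b ≠ 0 := by
      intro h0
      have h1' : zer x b = 1 := by simp [zer, h0]
      have h2b : zer x b ≤ zer y b := h2 b
      rw [h1', hzy] at h2b
      omega
    have : Nonempty {i // x.2 i = b} := Fintype.card_pos_iff.mp (Nat.pos_of_ne_zero hx)
    obtain ⟨⟨i, hi⟩⟩ := this
    exact ⟨i, hi⟩
  exact exists_surj_comp x.2 y.2 hs (fun b => h1 b)

lemma wqo (f : ℕ → Idx d) : ∃ i j, i < j ∧ rel (f i) (f j) := by
  have h1 : (Set.univ : Set (Fin d → ℕ)).IsPWO :=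
    Set.isPWO_of_wellQuasiOrderedLE _
  have hprod := h1.prod h1
  obtain ⟨i, j, hij, hle⟩ := Set.PartiallyWellOrderedOn.exists_lt hprod (f := fun k => (cnt (f k), zer (f k)))
    (fun k => Set.mem_prod.mpr ⟨Set.mem_univ _, Set.mem_univ _⟩)
  exact ⟨i, j, hij, rel_of _ _ hle.1 hle.2⟩

/-- In a wqo, every upward-closed set has a finite basis. -/
lemma exists_finite_basis {X : Type*} (r : X → X → Prop)
    (hwqo : ∀ f : ℕ → X, ∃ i j, i < j ∧ r (f i) (f j))
    (U : Set X) (hU : ∀ ⦃x y⦄, r x y → x ∈ U → y ∈ U) :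
    ∃ F : Finset X, ↑F ⊆ U ∧ ∀ x, x ∈ U ↔ ∃ y ∈ F, r y x := by
  classical
  by_contra hcon
  push_neg at hcon
  have pick : ∀ F : Finset X, ↑F ⊆ U → ∃ x, x ∈ U ∧ ∀ y ∈ F, ¬ r y x := by
    intro F hF
    obtain ⟨x, hx⟩ := hcon F hF
    have himp : (∃ y ∈ F, r y x) → x ∈ U := by
      rintro ⟨y, hy, hr⟩
      exact hU hr (hF hy)
    have hx' : x ∈ U ∧ ¬ ∃ y ∈ F, r y x := by tauto
    push_neg at hx'
    exact ⟨x, hx'⟩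
  choose pickx hx1 hx2 using pick
  let Fc : ℕ → {F : Finset X // ↑F ⊆ U} := fun n =>
    Nat.rec (motive := fun _ => {F : Finset X // ↑F ⊆ U})
      ⟨∅, by simp⟩
      (fun _ p => ⟨insert (pickx p.1 p.2) p.1, by
        rw [Finset.coe_insert]
        exact Set.insert_subset (hx1 p.1 p.2) p.2⟩) n
  let g : ℕ → X := fun n => pickx (Fc n).1 (Fc n).2
  have hstep : ∀ n, (Fc (n + 1)).1 = insert (g n) (Fc n).1 := fun n => rfl
  have hsub : ∀ m n, m ≤ n → (Fc m).1 ⊆ (Fc n).1 := by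
    intro m n h
    induction n with
    | zero => simpa [Nat.le_zero.mp h] using Finset.Subset.refl _
    | succ k ih =>
      rcases Nat.lt_or_ge m (k + 1) with h' | h'
      · refine (ih (Nat.lt_succ_iff.mp h')).trans ?_
        rw [hstep k]
        exact Finset.subset_insert _ _
      · have : m = k + 1 := le_antisymm h h'
        subst this
        exact Finset.Subset.refl _
  have hgmem : ∀ m n, m < n → g m ∈ (Fc n).1 := by
    intro m n h
    refine hsub (m + 1) n h ?_
    rw [hstep m]
    exact Finset.mem_insert_self _ _
  obtain ⟨i, j, hij, hr⟩ := hwqo g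
  exact hx2 (Fc j).1 (Fc j).2 (g i) (hgmem i j hij) hr

lemma countable_lowerSets {X : Type*} [Countable X] (r : X → X → Prop)
    (hwqo : ∀ f : ℕ → X, ∃ i j, i < j ∧ r (f i) (f j)) :
    {T : Set X | ∀ ⦃x y⦄, r x y → y ∈ T → x ∈ T}.Countable := by
  classical
  have hb : ∀ T ∈ {T : Set X | ∀ ⦃x y⦄, r x y → y ∈ T → x ∈ T},
      ∃ F : Finset X, ∀ x, x ∈ Tᶜ ↔ ∃ y ∈ F, r y x := by
    intro T hT
    obtain ⟨F, _, hF⟩ := exists_finite_basis r hwqo Tᶜ (by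
      intro x y hr hx hy
      exact hx (hT hr hy))
    exact ⟨F, hF⟩
  rw [Set.countable_iff_exists_injective]
  obtain ⟨e, he⟩ := exists_injective_nat (Finset X)
  refine ⟨fun T => e (hb T.1 T.2).choose, ?_⟩
  intro T T' h
  have h2 := he h
  have hT := (hb T.1 T.2).choose_spec
  have hT' := (hb T'.1 T'.2).choose_spec
  rw [h2] at hT
  have : (T.1)ᶜ = (T'.1)ᶜ := by
    ext x
    rw [hT x, hT' x]
  ext1
  exact compl_injective this

end CPAux

/-- For a finite unary relational language `Γ`, there are at most countably many
polymorphism clones determined by sets of relations disjunctively definable from `Γ`. -/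
theorem countable_pol_of_finite_language {A : Type*} (Γ : Set (Set A)) (hΓ : Γ.Finite) :
    {F : Set (Op A) | ∃ Q ⊆ DD Γ, F = Pol Q}.Countable := by
  classical
  obtain ⟨d, B, hB⟩ : ∃ (d : ℕ) (B : Fin d → Set A), Set.range B = Γ := by
    refine ⟨hΓ.toFinset.card, fun i => (hΓ.toFinset.equivFin.symm i : Set A), ?_⟩
    ext s
    constructor
    · rintro ⟨i, rfl⟩
      exact hΓ.mem_toFinset.mp (hΓ.toFinset.equivFin.symm i).2
    · intro hs
      exact ⟨hΓ.toFinset.equivFin ⟨s, hΓ.mem_toFinset.mpr hs⟩, by simp⟩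
  set S := {F : Set (Op A) | ∃ Q ⊆ DD Γ, F = Pol Q} with hS
  let D : Set (Op A) → Set (FinRel A) := fun F => {ρ | ρ ∈ DD Γ ∧ F ⊆ Pol {ρ}}
  let T : Set (Op A) → Set (CPAux.Idx d) :=
    fun F => {x | (⟨x.1, Cross (B ∘ x.2)⟩ : FinRel A) ∈ D F}
  have hP1 : ∀ F ∈ S, F = Pol (D F) := by
    rintro F ⟨Q, hQ, rfl⟩
    apply Set.Subset.antisymm
    · intro f hf ρ hρ
      exact hρ.2 hf ρ rfl
    · intro f hf ρ hρQ
      refine hf ρ ⟨hQ hρQ, ?_⟩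
      intro g hg ρ' hρ'
      have : ρ' = ρ := hρ'
      rw [this]
      exact hg ρ hρQ
  have hP2 : ∀ F ∈ S, ∀ ⦃x y : CPAux.Idx d⦄, CPAux.rel x y → y ∈ T F → x ∈ T F := by
    intro F hF x y hxy hy
    obtain ⟨π, hπ, hcomp⟩ := hxy
    obtain ⟨⟨hy1, _⟩, hyP⟩ := hy
    have hx1 : 1 ≤ x.1 := (π ⟨0, hy1⟩).pos
    refine ⟨⟨hx1, B ∘ x.2, fun i => hB ▸ Set.mem_range_self _, rfl⟩, ?_⟩
    intro f hf ρ' hρ'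
    have : ρ' = (⟨x.1, Cross (B ∘ x.2)⟩ : FinRel A) := hρ'
    rw [this]
    have hpres : Preserves f.2 (Cross (B ∘ y.2)) := hyP hf _ rfl
    refine CPAux.preserves_of_comp f.2 (B ∘ x.2) π hπ ?_
    have hcc : (B ∘ x.2) ∘ π = B ∘ y.2 := by
      funext c
      exact congrArg B (congrFun hcomp c)
    rw [hcc]
    exact hpres
  have hP3 : ∀ F F', T F = T F' → D F = D F' := by
    have hrec : ∀ F, D F = {ρ : FinRel A |
        ∃ g : Fin ρ.1 → Fin d, ρ.2 = Cross (B ∘ g) ∧ (⟨ρ.1, g⟩ : CPAux.Idx d) ∈ T F} := by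
      intro F
      ext ρ
      constructor
      · rintro ⟨⟨h1, γ, hγ, h2⟩, hsub⟩
        have hγ' : ∀ i, γ i ∈ Set.range B := fun i => hB ▸ hγ i
        choose g hg using hγ'
        have hBg : B ∘ g = γ := funext hg
        refine ⟨g, by rw [h2, hBg], ?_⟩
        show (⟨ρ.1, Cross (B ∘ g)⟩ : FinRel A) ∈ D F
        have heq : (⟨ρ.1, Cross (B ∘ g)⟩ : FinRel A) = ρ := by
          rw [hBg, ← h2]
        rw [heq]
        exact ⟨⟨h1, γ, hγ, h2⟩, hsub⟩
      · rintro ⟨g, hρ2, hT⟩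
        have heq : ρ = (⟨ρ.1, Cross (B ∘ g)⟩ : FinRel A) := by
          rw [← hρ2]
        rw [heq]
        exact hT
    intro F F' h
    rw [hrec F, hrec F', h]
  have hL := CPAux.countable_lowerSets (X := CPAux.Idx d) CPAux.rel CPAux.wqo
  rw [Set.countable_iff_exists_injective]
  obtain ⟨e, he⟩ := Set.countable_iff_exists_injective.mp hL
  refine ⟨fun F => e ⟨T F.1, hP2 F.1 F.2⟩, ?_⟩
  intro F F' h
  have h1 := he h
  have hTT : T F.1 = T F'.1 := congrArg Subtype.val h1
  have : F.1 = F'.1 := by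
    rw [hP1 F.1 F.2, hP1 F'.1 F'.2, hP3 _ _ hTT]
  exact Subtype.ext this
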